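/- Under the setting above (Γ ≻ 0, Σ ⪰ 0 commuting), the gradient of ℓ satisfies ‖∇ℓ(U,u)‖² ≥ u² ‖(u U − Γ^{-1}Σ) Γ‖_F², and moreover ℓ(U,u) − min ℓ ≤ (1/2) ‖Γ^{1/2}‖_F² ‖Γ^{-1}‖_F² ‖(u U − Γ^{-1}Σ) Γ‖_F². Consequently, if u² ≥ c > 0, then ℓ satisfies the Polyak–Łojasiewicz inequality ‖∇ℓ(U,u)‖² ≥ μ (ℓ(U,u) − min ℓ) with μ = 2c / (‖Γ^{1/2}‖_F² ‖Γ^{-1}‖_F²). -/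

import Mathlib

open Matrix
open scoped Matrix

/-- Frobenius norm of a real square matrix. -/
noncomputable def frobNorm {d : ℕ} (A : Matrix (Fin d) (Fin d) ℝ) : ℝ :=
  Real.sqrt (∑ i, ∑ j, (A i j)^2)

open scoped ComplexOrder in
/-- The square root of a positive semidefinite matrix, as `Matrix.PosSemidef.sqrt` was defined
in Mathlib of December 2024 (removed since). -/
noncomputable def Matrix.PosSemidef.sqrt {n 𝕜 : Type*} [Fintype n] [DecidableEq n] [RCLike 𝕜]
    {A : Matrix n n 𝕜} (hA : A.PosSemidef) : Matrix n n 𝕜 :=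
  hA.1.eigenvectorUnitary.1 * diagonal ((↑) ∘ Real.sqrt ∘ hA.1.eigenvalues) *
  (star hA.1.eigenvectorUnitary : Matrix n n 𝕜)

lemma Matrix.PosSemidef.sqrt_mul_self {d : ℕ} {A : Matrix (Fin d) (Fin d) ℝ}
    (hA : A.PosSemidef) : hA.sqrt * hA.sqrt = A := by
  conv_rhs => rw [hA.1.spectral_theorem, Unitary.conjStarAlgAut_apply]
  have hU : (star hA.1.eigenvectorUnitary : Matrix (Fin d) (Fin d) ℝ) *
      hA.1.eigenvectorUnitary.1 = 1 := Unitary.coe_star_mul_self _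
  have hD : diagonal ((RCLike.ofReal : ℝ → ℝ) ∘ Real.sqrt ∘ hA.1.eigenvalues) *
      diagonal ((RCLike.ofReal : ℝ → ℝ) ∘ Real.sqrt ∘ hA.1.eigenvalues) =
      diagonal (RCLike.ofReal ∘ hA.1.eigenvalues : Fin d → ℝ) := by
    rw [diagonal_mul_diagonal]
    congr 1; funext i
    simp [Real.mul_self_sqrt (hA.eigenvalues_nonneg i)]
  simp only [Matrix.PosSemidef.sqrt]
  rw [← hD]
  simp only [Matrix.mul_assoc]
  rw [← Matrix.mul_assoc _ hA.1.eigenvectorUnitary.1, hU, Matrix.one_mul]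

lemma Matrix.PosSemidef.sqrt_isHermitian {d : ℕ} {A : Matrix (Fin d) (Fin d) ℝ}
    (hA : A.PosSemidef) : hA.sqrt.IsHermitian := by
  rw [Matrix.IsHermitian, Matrix.PosSemidef.sqrt, Matrix.conjTranspose_mul, Matrix.conjTranspose_mul,
    Matrix.star_eq_conjTranspose, Matrix.conjTranspose_conjTranspose, Matrix.diagonal_conjTranspose,
    Matrix.mul_assoc]
  rw [star_trivial]

attribute [local instance] Matrix.frobeniusSeminormedAddCommGroup Matrix.frobeniusNormedRing

lemma frobNorm_eq {d : ℕ} (A : Matrix (Fin d) (Fin d) ℝ) : frobNorm A = ‖A‖ := by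
  rw [frobNorm, Matrix.frobenius_norm_def, Real.sqrt_eq_rpow]
  norm_num [Real.norm_eq_abs, sq_abs]

lemma frobNorm_nonneg {d : ℕ} (A : Matrix (Fin d) (Fin d) ℝ) : 0 ≤ frobNorm A := by
  rw [frobNorm_eq]; exact norm_nonneg _

lemma frobNorm_sq {d : ℕ} (A : Matrix (Fin d) (Fin d) ℝ) :
    (frobNorm A)^2 = ∑ i, ∑ j, (A i j)^2 := by
  rw [frobNorm, Real.sq_sqrt]
  positivity

lemma frobNorm_smul {d : ℕ} (u : ℝ) (A : Matrix (Fin d) (Fin d) ℝ) :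
    frobNorm (u • A) = |u| * frobNorm A := by
  have h : ∑ i, ∑ j, ((u • A) i j)^2 = u^2 * ∑ i, ∑ j, (A i j)^2 := by
    simp [Matrix.smul_apply, mul_pow, Finset.mul_sum]
  rw [frobNorm, h, Real.sqrt_mul (sq_nonneg u), Real.sqrt_sq_eq_abs, frobNorm]

lemma PL_aux (a b f u c L R : ℝ) (hc : 0 < c) (hL0 : 0 ≤ L)
    (hb : L ≤ 1/2 * a^2 * b^2 * f^2) (ha : u^2 * f^2 ≤ R) (hR : 0 ≤ R)
    (hu : c ≤ u^2) : 2 * c / (a^2 * b^2) * L ≤ R := by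
  rcases eq_or_lt_of_le (by positivity : (0:ℝ) ≤ a^2 * b^2) with h0 | hpos
  · rw [← h0, div_zero, zero_mul]; exact hR
  · have h1 : 2*c/(a^2*b^2)*L ≤ 2*c/(a^2*b^2)*(1/2*a^2*b^2*f^2) :=
      mul_le_mul_of_nonneg_left hb (by positivity)
    have hne : a^2*b^2 ≠ 0 := ne_of_gt hpos
    have h2 : 2*c/(a^2*b^2)*(1/2*a^2*b^2*f^2) = c*f^2 := by
      rw [div_mul_eq_mul_div, div_eq_iff hne]
      ring
    have h3 : c*f^2 ≤ u^2*f^2 := mul_le_mul_of_nonneg_right hu (sq_nonneg f)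
    linarith

lemma frobNorm_mul_le {d : ℕ} (A B : Matrix (Fin d) (Fin d) ℝ) :
    frobNorm (A * B) ≤ frobNorm A * frobNorm B := by
  simp only [frobNorm_eq]
  exact Matrix.frobenius_norm_mul A B

lemma trace_mul_transpose_self {d : ℕ} (A : Matrix (Fin d) (Fin d) ℝ) :
    (A * Aᵀ).trace = ∑ i, ∑ j, (A i j)^2 := by
  simp [Matrix.trace, Matrix.mul_apply, Matrix.diag, sq]

/-- PL inequality for the simplified population loss
`ℓ(U,u) = ½u² tr(ΓUUᵀ) − u tr(UΣ)` with gradient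
`(∂ℓ/∂U, ∂ℓ/∂u) = (u²UΓ − uΣ, u tr(ΓUUᵀ) − tr(UΣ))`:
(a) `‖∇ℓ‖² ≥ u²‖(uU − Γ⁻¹Σ)Γ‖_F²`;
(b) `ℓ − min ℓ ≤ ½‖Γ^{1/2}‖_F²‖Γ⁻¹‖_F²‖(uU − Γ⁻¹Σ)Γ‖_F²`;
(c) if `u² ≥ c > 0` then `‖∇ℓ‖² ≥ μ(ℓ − min ℓ)` with
`μ = 2c/(‖Γ^{1/2}‖_F²‖Γ⁻¹‖_F²)`. -/
theorem lsa_loss_PL (d : ℕ) (Γ Sg : Matrix (Fin d) (Fin d) ℝ)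
    (hΓ : Γ.PosDef) (hS : Sg.PosSemidef) (hcomm : Γ * Sg = Sg * Γ) (c : ℝ) (hc : 0 < c) :
    (∀ (U : Matrix (Fin d) (Fin d) ℝ) (u : ℝ),
      u^2 * (frobNorm ((u • U - Γ⁻¹ * Sg) * Γ))^2
      ≤ (frobNorm (u^2 • (U * Γ) - u • Sg))^2
          + (u * (Γ * U * Uᵀ).trace - (U * Sg).trace)^2) ∧
    (∀ (U : Matrix (Fin d) (Fin d) ℝ) (u : ℝ),
      ((1/2) * u^2 * (Γ * U * Uᵀ).trace - u * (U * Sg).trace)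
          - (-(1/2) * (Γ⁻¹ * Sg * Sg).trace)
      ≤ (1/2) * (frobNorm hΓ.posSemidef.sqrt)^2 * (frobNorm (Γ⁻¹))^2 *
          (frobNorm ((u • U - Γ⁻¹ * Sg) * Γ))^2) ∧
    (∀ (U : Matrix (Fin d) (Fin d) ℝ) (u : ℝ), c ≤ u^2 →
      (2 * c / ((frobNorm hΓ.posSemidef.sqrt)^2 * (frobNorm (Γ⁻¹))^2)) *
          (((1/2) * u^2 * (Γ * U * Uᵀ).trace - u * (U * Sg).trace)
            - (-(1/2) * (Γ⁻¹ * Sg * Sg).trace))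
      ≤ (frobNorm (u^2 • (U * Γ) - u • Sg))^2
          + (u * (Γ * U * Uᵀ).trace - (U * Sg).trace)^2) := by
  have hdet : IsUnit Γ.det := isUnit_iff_ne_zero.mpr (ne_of_gt hΓ.det_pos)
  have hinvΓ : Γ⁻¹ * Γ = 1 := Matrix.nonsing_inv_mul Γ hdet
  have hΓinv : Γ * Γ⁻¹ = 1 := Matrix.mul_nonsing_inv Γ hdet
  have hΓt : Γᵀ = Γ := by
    have := hΓ.isHermitian
    rw [Matrix.IsHermitian, Matrix.conjTranspose_eq_transpose_of_trivial] at this; exact this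
  have hSt : Sgᵀ = Sg := by
    have := hS.isHermitian
    rw [Matrix.IsHermitian, Matrix.conjTranspose_eq_transpose_of_trivial] at this; exact this
  have hΓinvt : (Γ⁻¹)ᵀ = Γ⁻¹ := by rw [Matrix.transpose_nonsing_inv, hΓt]
  set S : Matrix (Fin d) (Fin d) ℝ := hΓ.posSemidef.sqrt with hSdef
  have hSS : S * S = Γ := hΓ.posSemidef.sqrt_mul_self
  have hSsym : Sᵀ = S := by
    have := hΓ.posSemidef.sqrt_isHermitian
    rw [Matrix.IsHermitian, Matrix.conjTranspose_eq_transpose_of_trivial] at this; exact this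
  -- key simplification: (uU − Γ⁻¹Sg)Γ = uUΓ − Sg
  have hGSG : Γ⁻¹ * Sg * Γ = Sg := by
    calc Γ⁻¹ * Sg * Γ = Γ⁻¹ * (Sg * Γ) := by rw [Matrix.mul_assoc]
      _ = Γ⁻¹ * (Γ * Sg) := by rw [hcomm]
      _ = (Γ⁻¹ * Γ) * Sg := by rw [Matrix.mul_assoc]
      _ = Sg := by rw [hinvΓ, Matrix.one_mul]
  have hAΓ : ∀ (U : Matrix (Fin d) (Fin d) ℝ) (u : ℝ),
      (u • U - Γ⁻¹ * Sg) * Γ = u • (U * Γ) - Sg := by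
    intro U u
    rw [Matrix.sub_mul, Matrix.smul_mul, hGSG]
  -- part (a)
  have parta : ∀ (U : Matrix (Fin d) (Fin d) ℝ) (u : ℝ),
      u^2 * (frobNorm ((u • U - Γ⁻¹ * Sg) * Γ))^2
      ≤ (frobNorm (u^2 • (U * Γ) - u • Sg))^2
          + (u * (Γ * U * Uᵀ).trace - (U * Sg).trace)^2 := by
    intro U u
    have h1 : u^2 • (U * Γ) - u • Sg = u • (u • (U * Γ) - Sg) := by
      rw [smul_sub, smul_smul, sq]
    rw [h1, hAΓ, frobNorm_smul, mul_pow, sq_abs]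
    nlinarith [sq_nonneg (u * (Γ * U * Uᵀ).trace - (U * Sg).trace)]
  -- loss gap equals ½‖S A‖²
  have gap_eq : ∀ (U : Matrix (Fin d) (Fin d) ℝ) (u : ℝ),
      ((1/2) * u^2 * (Γ * U * Uᵀ).trace - u * (U * Sg).trace)
          - (-(1/2) * (Γ⁻¹ * Sg * Sg).trace)
      = (1/2) * (frobNorm (S * (u • U - Γ⁻¹ * Sg)))^2 := by
    intro U u
    set A : Matrix (Fin d) (Fin d) ℝ := u • U - Γ⁻¹ * Sg with hA
    have hAt : Aᵀ = u • Uᵀ - Sg * Γ⁻¹ := by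
      rw [hA, Matrix.transpose_sub, Matrix.transpose_smul, Matrix.transpose_mul, hSt, hΓinvt]
    have htr1 : ((S * A) * (S * A)ᵀ).trace = (Γ * A * Aᵀ).trace := by
      rw [Matrix.transpose_mul, hSsym]
      calc (S * A * (Aᵀ * S)).trace = ((S * A * Aᵀ) * S).trace := by
            rw [Matrix.mul_assoc, Matrix.mul_assoc, Matrix.mul_assoc]
        _ = (S * (S * A * Aᵀ)).trace := Matrix.trace_mul_comm _ _
        _ = (Γ * A * Aᵀ).trace := by
            rw [← Matrix.mul_assoc, ← Matrix.mul_assoc, hSS]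
    have htr2 : (Γ * A * Aᵀ).trace
        = u^2 * (Γ * U * Uᵀ).trace - 2 * u * (U * Sg).trace + (Γ⁻¹ * Sg * Sg).trace := by
      have hexp : Γ * A * Aᵀ
          = u^2 • (Γ * U * Uᵀ) - u • (Γ * U * (Sg * Γ⁻¹))
            - u • (Γ * (Γ⁻¹ * Sg) * Uᵀ) + Γ * (Γ⁻¹ * Sg) * (Sg * Γ⁻¹) := by
        rw [hA, hAt]
        simp only [Matrix.mul_sub, Matrix.sub_mul, Matrix.mul_smul, Matrix.smul_mul,
          smul_sub, smul_smul]
        rw [sq]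
        abel
      have e1 : (Γ * U * (Sg * Γ⁻¹)).trace = (U * Sg).trace := by
        calc (Γ * U * (Sg * Γ⁻¹)).trace = ((Γ * U * Sg) * Γ⁻¹).trace := by
              simp only [Matrix.mul_assoc]
          _ = (Γ⁻¹ * (Γ * U * Sg)).trace := Matrix.trace_mul_comm _ _
          _ = (U * Sg).trace := by
              rw [← Matrix.mul_assoc, ← Matrix.mul_assoc, hinvΓ, Matrix.one_mul]
      have hGGS : Γ * (Γ⁻¹ * Sg) = Sg := by
        rw [← Matrix.mul_assoc, hΓinv, Matrix.one_mul]
      have e2 : (Γ * (Γ⁻¹ * Sg) * Uᵀ).trace = (U * Sg).trace := by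
        rw [hGGS, ← Matrix.trace_transpose, Matrix.transpose_mul, Matrix.transpose_transpose,
          hSt, Matrix.trace_mul_comm]
      have e3 : (Γ * (Γ⁻¹ * Sg) * (Sg * Γ⁻¹)).trace = (Γ⁻¹ * Sg * Sg).trace := by
        rw [hGGS]
        calc (Sg * (Sg * Γ⁻¹)).trace = ((Sg * Sg) * Γ⁻¹).trace := by rw [Matrix.mul_assoc]
          _ = (Γ⁻¹ * (Sg * Sg)).trace := Matrix.trace_mul_comm _ _
          _ = (Γ⁻¹ * Sg * Sg).trace := by rw [Matrix.mul_assoc]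
      rw [hexp]
      simp only [Matrix.trace_add, Matrix.trace_sub, Matrix.trace_smul, smul_eq_mul]
      rw [e1, e2, e3]
      ring
    rw [frobNorm_sq, ← trace_mul_transpose_self, htr1, htr2]
    ring
  -- part (b)
  have partb : ∀ (U : Matrix (Fin d) (Fin d) ℝ) (u : ℝ),
      ((1/2) * u^2 * (Γ * U * Uᵀ).trace - u * (U * Sg).trace)
          - (-(1/2) * (Γ⁻¹ * Sg * Sg).trace)
      ≤ (1/2) * (frobNorm S)^2 * (frobNorm (Γ⁻¹))^2 *
          (frobNorm ((u • U - Γ⁻¹ * Sg) * Γ))^2 := by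
    intro U u
    rw [gap_eq]
    set A : Matrix (Fin d) (Fin d) ℝ := u • U - Γ⁻¹ * Sg with hA
    have hSA : S * A = S * (A * Γ) * Γ⁻¹ := by
      rw [Matrix.mul_assoc (S) (A * Γ) _, Matrix.mul_assoc A Γ _, hΓinv, Matrix.mul_one]
    have hle : frobNorm (S * A) ≤ frobNorm S * frobNorm (A * Γ) * frobNorm Γ⁻¹ := by
      rw [hSA]
      calc frobNorm (S * (A * Γ) * Γ⁻¹) ≤ frobNorm (S * (A * Γ)) * frobNorm Γ⁻¹ :=
            frobNorm_mul_le _ _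
        _ ≤ frobNorm S * frobNorm (A * Γ) * frobNorm Γ⁻¹ := by
            apply mul_le_mul_of_nonneg_right (frobNorm_mul_le _ _) (frobNorm_nonneg _)
    have hsq : (frobNorm (S * A))^2 ≤ (frobNorm S * frobNorm (A * Γ) * frobNorm Γ⁻¹)^2 := by
      apply pow_le_pow_left₀ (frobNorm_nonneg _) hle
    nlinarith [hsq]
  refine ⟨parta, partb, ?_⟩
  -- part (c)
  intro U u hu
  exact PL_aux (frobNorm S) (frobNorm Γ⁻¹) (frobNorm ((u • U - Γ⁻¹ * Sg) * Γ)) u c _ _ hc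
    (by rw [gap_eq]; positivity) (partb U u) (parta U u) (by positivity) hu
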